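/- With O = C[[u^{-1}]] and the grading g = ⊕_{r=−k}^{k} g_r associated to a simple root α of coefficient k, the subspace O_α = Σ_{r=1}^{k} u^{-1}O·g_r + Σ_{r=1−k}^{0} O·g_r + uO·g_{−k} is a Lie subalgebra of g((u^{-1})). -/

import Mathlib

attribute [-instance] HahnSeries.powerSeriesAlgebra

open TensorProduct

/-- `u^{-m}·𝕆` where `𝕆 = ℂ[[u⁻¹]]`: the Laurent series (in `t = u⁻¹`) whose
coefficients vanish below `m`.  Thus `coeffGe 0 = 𝕆`, `coeffGe 1 = u⁻¹𝕆`,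
`coeffGe (-1) = u𝕆`. -/
noncomputable def coeffGe (m : ℤ) : Submodule ℂ (LaurentSeries ℂ) where
  carrier := {f | ∀ n < m, f.coeff n = 0}
  add_mem' := by
    intro a b ha hb n hn
    simp only [HahnSeries.coeff_add, ha n hn, hb n hn, add_zero]
  zero_mem' := by intro n hn; simp
  smul_mem' := by
    intro c f hf n hn
    simp only [HahnSeries.coeff_smul, hf n hn, smul_zero]

/-- The image of `S ⊗ W` in `ℂ((u⁻¹)) ⊗ g`, for `S` a subspace of Laurent series and
`W` a subspace of `g`. -/
noncomputable def tens {g : Type*} [AddCommGroup g] [Module ℂ g]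
    (S : Submodule ℂ (LaurentSeries ℂ)) (W : Submodule ℂ g) :
    Submodule ℂ (LaurentSeries ℂ ⊗[ℂ] g) :=
  LinearMap.range (TensorProduct.map S.subtype W.subtype)

/-- The threshold exponent used for degree `r`. -/
def mfun (k r : ℤ) : ℤ := if 1 ≤ r then 1 else if 1 - k ≤ r then 0 else -1

lemma coeffGe_antitone {a b : ℤ} (h : a ≤ b) : coeffGe b ≤ coeffGe a :=
  fun _ hf n hn => hf n (lt_of_lt_of_le hn h)

lemma mul_mem_coeffGe {a b : ℤ} {f f' : LaurentSeries ℂ}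
    (hf : f ∈ coeffGe a) (hf' : f' ∈ coeffGe b) : f * f' ∈ coeffGe (a + b) := by
  intro n hn
  rw [HahnSeries.coeff_mul]
  apply Finset.sum_eq_zero
  intro ij hij
  rw [Finset.mem_addAntidiagonal] at hij
  by_cases h1 : ij.1 < a
  · rw [hf _ h1, zero_mul]
  · rw [hf' ij.2 (by omega), mul_zero]

lemma tmul_mem_tens {g : Type*} [AddCommGroup g] [Module ℂ g]
    {S : Submodule ℂ (LaurentSeries ℂ)} {W : Submodule ℂ g}
    {f : LaurentSeries ℂ} {x : g} (hf : f ∈ S) (hx : x ∈ W) :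
    f ⊗ₜ[ℂ] x ∈ tens S W :=
  ⟨(⟨f, hf⟩ : S) ⊗ₜ[ℂ] (⟨x, hx⟩ : W), rfl⟩

lemma tens_eq_span {g : Type*} [AddCommGroup g] [Module ℂ g]
    (S : Submodule ℂ (LaurentSeries ℂ)) (W : Submodule ℂ g) :
    tens S W = Submodule.span ℂ {t | ∃ f ∈ S, ∃ x ∈ W, f ⊗ₜ[ℂ] x = t} := by
  rw [tens, TensorProduct.range_map_eq_span_tmul]
  congr 1
  ext t
  constructor
  · rintro ⟨m, n, rfl⟩
    exact ⟨m, m.2, n, n.2, rfl⟩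
  · rintro ⟨f, hf, x, hx, rfl⟩
    exact ⟨⟨f, hf⟩, ⟨x, hx⟩, rfl⟩

section Helpers
set_option synthInstance.maxHeartbeats 1000000
set_option maxHeartbeats 1000000
variable {g : Type*} [LieRing g] [LieAlgebra ℂ g]

lemma my_add_lie (x y z : LaurentSeries ℂ ⊗[ℂ] g) : ⁅x + y, z⁆ = ⁅x, z⁆ + ⁅y, z⁆ :=
  add_lie x y z

lemma my_lie_add (x y z : LaurentSeries ℂ ⊗[ℂ] g) : ⁅x, y + z⁆ = ⁅x, y⁆ + ⁅x, z⁆ :=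
  lie_add x y z

lemma my_zero_lie (z : LaurentSeries ℂ ⊗[ℂ] g) : ⁅(0 : LaurentSeries ℂ ⊗[ℂ] g), z⁆ = 0 :=
  zero_lie (L := LaurentSeries ℂ ⊗[ℂ] g) z

lemma my_lie_zero (x : LaurentSeries ℂ ⊗[ℂ] g) : ⁅x, (0 : LaurentSeries ℂ ⊗[ℂ] g)⁆ = 0 :=
  lie_zero (L := LaurentSeries ℂ ⊗[ℂ] g) (M := LaurentSeries ℂ ⊗[ℂ] g) x

lemma my_smul_lie' (t : LaurentSeries ℂ) (x z : LaurentSeries ℂ ⊗[ℂ] g) :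
    ⁅t • x, z⁆ = t • ⁅x, z⁆ :=
  smul_lie t x z

lemma my_lie_smul' (t : LaurentSeries ℂ) (x z : LaurentSeries ℂ ⊗[ℂ] g) :
    ⁅x, t • z⁆ = t • ⁅x, z⁆ :=
  lie_smul t x z

lemma csmul_eq (c : ℂ) (w : LaurentSeries ℂ ⊗[ℂ] g) :
    c • w = (c • (1 : LaurentSeries ℂ)) • w := by
  induction w using TensorProduct.induction_on with
  | zero => rw [smul_zero, smul_zero]
  | tmul f x =>
      rw [TensorProduct.smul_tmul', TensorProduct.smul_tmul']
      congr 1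
      rw [smul_eq_mul, ← HahnSeries.single_zero_mul_eq_smul]
      congr 1
      ext n
      simp only [HahnSeries.coeff_smul, HahnSeries.coeff_one, HahnSeries.coeff_single]
      split_ifs <;> simp
  | add w1 w2 h1 h2 => rw [smul_add, smul_add, h1, h2]

lemma my_smul_lie (c : ℂ) (x z : LaurentSeries ℂ ⊗[ℂ] g) : ⁅c • x, z⁆ = c • ⁅x, z⁆ := by
  rw [csmul_eq c x, my_smul_lie', ← csmul_eq]

lemma my_lie_smul (c : ℂ) (x z : LaurentSeries ℂ ⊗[ℂ] g) : ⁅x, c • z⁆ = c • ⁅x, z⁆ := by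
  rw [csmul_eq c z, my_lie_smul', ← csmul_eq]

end Helpers

/-- With `𝕆 = ℂ[[u⁻¹]]` and the grading `g = ⊕_{r=−k}^{k} G r`
associated to a simple root `α` of coefficient `k` (so `⁅G r, G s⁆ ⊆ G (r+s)`, with
`G r = 0` outside `[−k,k]`), the subspace
`𝕆_α = Σ_{r=1}^{k} u⁻¹𝕆·G r + Σ_{r=1−k}^{0} 𝕆·G r + u𝕆·G (−k)`
is a Lie subalgebra of `g((u⁻¹))`. -/
theorem O_alpha_is_subalgebra
    {g : Type*} [LieRing g] [LieAlgebra ℂ g] [FiniteDimensional ℂ g]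
    (k : ℤ) (hk : 1 ≤ k)
    (G : ℤ → Submodule ℂ g)
    (hGbr : ∀ r s : ℤ, ∀ x ∈ G r, ∀ y ∈ G s, ⁅x, y⁆ ∈ G (r + s))
    (hGout : ∀ r : ℤ, (r < -k ∨ k < r) → G r = ⊥)
    (hGtop : (⨆ r : ℤ, G r) = ⊤)
    (Oα : Submodule ℂ (LaurentSeries ℂ ⊗[ℂ] g))
    (hOα : Oα = (⨆ r ∈ Set.Icc 1 k, tens (coeffGe 1) (G r)) ⊔
        (⨆ r ∈ Set.Icc (1 - k) 0, tens (coeffGe 0) (G r)) ⊔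
        tens (coeffGe (-1)) (G (-k))) :
    ∀ x ∈ Oα, ∀ y ∈ Oα, ⁅x, y⁆ ∈ Oα := by
  -- each generator is contained in Oα
  have hgen : ∀ r, -k ≤ r → r ≤ k → tens (coeffGe (mfun k r)) (G r) ≤ Oα := by
    intro r h1 h2
    rw [hOα]
    by_cases hr1 : 1 ≤ r
    · rw [mfun, if_pos hr1]
      exact le_sup_of_le_left (le_sup_of_le_left
        (le_iSup₂ (f := fun r _ => tens (coeffGe 1) (G r)) r ⟨hr1, h2⟩))
    · by_cases hr2 : 1 - k ≤ r
      · rw [mfun, if_neg hr1, if_pos hr2]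
        exact le_sup_of_le_left (le_sup_of_le_right
          (le_iSup₂ (f := fun r _ => tens (coeffGe 0) (G r)) r ⟨hr2, by omega⟩))
      · have : r = -k := by omega
        rw [mfun, if_neg hr1, if_neg hr2, this]
        exact le_sup_right
  -- Oα is contained in the sup of all generators
  have hOle : Oα ≤ ⨆ r ∈ Set.Icc (-k) k, tens (coeffGe (mfun k r)) (G r) := by
    rw [hOα]
    refine sup_le (sup_le ?_ ?_) ?_
    · refine iSup₂_le fun r hr => ?_
      have hm : mfun k r = 1 := if_pos hr.1
      refine le_trans (le_of_eq (by rw [hm]))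
        (le_iSup₂ (f := fun r (_ : r ∈ Set.Icc (-k) k) => tens (coeffGe (mfun k r)) (G r)) r
          ⟨by have := hr.1; omega, hr.2⟩)
    · refine iSup₂_le fun r hr => ?_
      have hm : mfun k r = 0 := by
        rw [mfun, if_neg (by have := hr.2; omega), if_pos hr.1]
      refine le_trans (le_of_eq (by rw [hm]))
        (le_iSup₂ (f := fun r (_ : r ∈ Set.Icc (-k) k) => tens (coeffGe (mfun k r)) (G r)) r
          ⟨by have := hr.1; omega, by have := hr.2; omega⟩)
    · have hm : mfun k (-k) = -1 := by
        rw [mfun, if_neg (by omega), if_neg (by omega)]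
      refine le_trans (le_of_eq (by rw [hm]))
        (le_iSup₂ (f := fun r (_ : r ∈ Set.Icc (-k) k) => tens (coeffGe (mfun k r)) (G r)) (-k)
          ⟨le_refl _, by omega⟩)
  -- bracket of pure-tensor generators
  have hbr : ∀ r, -k ≤ r → r ≤ k → ∀ s, -k ≤ s → s ≤ k →
      ∀ f ∈ coeffGe (mfun k r), ∀ a ∈ G r, ∀ f' ∈ coeffGe (mfun k s), ∀ b ∈ G s,
      ⁅f ⊗ₜ[ℂ] a, f' ⊗ₜ[ℂ] b⁆ ∈ Oα := by
    intro r hr1 hr2 s hs1 hs2 f hf a ha f' hf' b hb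
    rw [LieAlgebra.ExtendScalars.bracket_tmul]
    by_cases hrs : -k ≤ r + s ∧ r + s ≤ k
    · refine hgen (r + s) hrs.1 hrs.2 (tmul_mem_tens ?_ (hGbr r s a ha b hb))
      refine coeffGe_antitone ?_ (mul_mem_coeffGe hf hf')
      unfold mfun
      split_ifs <;> omega
    · have hbot : G (r + s) = ⊥ := hGout _ (by omega)
      have h0 : ⁅a, b⁆ = 0 := by
        have := hGbr r s a ha b hb
        rw [hbot] at this
        simpa using this
      rw [h0, TensorProduct.tmul_zero]
      exact Oα.zero_mem
  -- bilinearity reduction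
  let T : Submodule ℂ (LaurentSeries ℂ ⊗[ℂ] g) :=
    { carrier := {x | ∀ y ∈ Oα, ⁅x, y⁆ ∈ Oα}
      add_mem' := fun hx hx' y hy => by rw [my_add_lie]; exact Oα.add_mem (hx y hy) (hx' y hy)
      zero_mem' := fun y hy => by rw [my_zero_lie]; exact Oα.zero_mem
      smul_mem' := fun c x hx y hy => by rw [my_smul_lie]; exact Oα.smul_mem c (hx y hy) }
  suffices h : Oα ≤ T from fun x hx y hy => h hx y hy
  refine hOle.trans (iSup₂_le fun r hr => ?_)
  rw [tens_eq_span, Submodule.span_le]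
  rintro t ⟨f, hf, a, ha, rfl⟩
  intro y hy
  let T2 : Submodule ℂ (LaurentSeries ℂ ⊗[ℂ] g) :=
    { carrier := {y | ⁅f ⊗ₜ[ℂ] a, y⁆ ∈ Oα}
      add_mem' := fun hy hy' => by rw [Set.mem_setOf_eq, my_lie_add]; exact Oα.add_mem hy hy'
      zero_mem' := by rw [Set.mem_setOf_eq, my_lie_zero]; exact Oα.zero_mem
      smul_mem' := fun c y hy => by rw [Set.mem_setOf_eq, my_lie_smul]; exact Oα.smul_mem c hy }
  refine (hOle.trans (iSup₂_le fun s hs => ?_) : Oα ≤ T2) hy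
  rw [tens_eq_span, Submodule.span_le]
  rintro t ⟨f', hf', b, hb, rfl⟩
  exact hbr r hr.1 hr.2 s hs.1 hs.2 f hf a ha f' hf' b hb
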